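/- Let g : ℝⁿ → ℝ be convex, μ > 0, p ≥ 1. Suppose λ* ≠ 0 is a global minimizer of φ(λ) = g(λ) + (μ/(1+1/p))·‖λ‖^{1+1/p}, let λᵏ ∈ ℝⁿ with ‖λᵏ‖ ≥ ‖λ*‖ and λᵏ⁺¹ ≠ λ*, and let λᵏ⁺¹ be a global minimizer of λ ↦ g(λ) + (μ/2)·‖λᵏ‖^{(1/p)−1}·‖λ‖². Then ‖λᵏ⁺¹‖ ≤ ‖λᵏ‖^{1−1/p}·‖λ*‖^{1/p}. -/

import Mathlib

open Real

/-- Bernoulli-type inequality via weighted AM-GM. -/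
lemma aux_bern (s : ℝ) (hs0 : 0 < s) (hs1 : s ≤ 1) (x : ℝ) (hx : 0 ≤ x) :
    x ^ (1+s) ≤ (1+s)/2 * x^2 + (1 - (1+s)/2) := by
  have hw1 : (0:ℝ) ≤ (1+s)/2 := by linarith
  have hw2 : (0:ℝ) ≤ 1 - (1+s)/2 := by linarith
  have h := Real.geom_mean_le_arith_mean2_weighted hw1 hw2 (sq_nonneg x) zero_le_one
    (by ring)
  have h1 : ((x^2) : ℝ) ^ ((1+s)/2) = x ^ (1+s) := by
    rw [← Real.rpow_natCast x 2, ← Real.rpow_mul hx]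
    congr 1; ring
  rw [h1, Real.one_rpow, mul_one] at h
  linarith

/-- The function r ↦ μ/2 b^{s-1} r² − μ/(1+s) r^{1+s} is minimized at r = b. -/
lemma aux_psi (μ s b r : ℝ) (hμ : 0 < μ) (hs0 : 0 < s) (hs1 : s ≤ 1)
    (hb : 0 < b) (hr : 0 ≤ r) :
    μ/(1+s) * r^(1+s) + μ/2 * b^(s-1) * b^2 ≤ μ/(1+s) * b^(1+s) + μ/2 * b^(s-1) * r^2 := by
  have h1s : (0:ℝ) < 1 + s := by linarith
  have hq := aux_bern s hs0 hs1 (r/b) (by positivity)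
  have hbq : (0:ℝ) < b^(1+s) := Real.rpow_pos_of_pos hb _
  have hbs : (0:ℝ) < b^(s-1) := Real.rpow_pos_of_pos hb _
  have e1 : (r/b)^(1+s) * b^(1+s) = r^(1+s) := by
    rw [Real.div_rpow hr hb.le, div_mul_cancel₀]
    exact hbq.ne'
  have h3 : b^(1+s) = b^(s-1) * b^2 := by
    rw [← Real.rpow_natCast b 2, ← Real.rpow_add hb]
    congr 1; ring
  have key := mul_le_mul_of_nonneg_right hq hbq.le
  rw [e1] at key
  have e2 : ((1+s)/2*((r/b):ℝ)^2 + (1-(1+s)/2)) * b^(1+s)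
      = (1+s)/2 * (b^(s-1) * r^2) + (1-(1+s)/2) * (b^(s-1)*b^2) := by
    rw [h3, div_pow]
    field_simp
  rw [e2] at key
  rw [h3]
  have hmul := mul_le_mul_of_nonneg_left key (by positivity : (0:ℝ) ≤ μ/(1+s))
  have e3 : μ/(1+s)*((1+s)/2 * (b^(s-1) * r^2) + (1-(1+s)/2) * (b^(s-1)*b^2))
      = μ/2*(b^(s-1)*r^2) + (μ/(1+s)-μ/2)*(b^(s-1)*b^2) := by
    field_simp
  rw [e3] at hmul
  linarith

/-- Subgradient inequality at a minimizer of g + γ‖·‖². -/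
lemma aux_subgrad (n : ℕ) (g : EuclideanSpace ℝ (Fin n) → ℝ)
    (hg : ConvexOn ℝ Set.univ g) (γ : ℝ) (hγ : 0 ≤ γ)
    (x : EuclideanSpace ℝ (Fin n))
    (hx : ∀ z, g x + γ * ‖x‖^2 ≤ g z + γ * ‖z‖^2)
    (z : EuclideanSpace ℝ (Fin n)) :
    g x ≤ g z + 2*γ*(inner ℝ x (z - x) : ℝ) := by
  have step : ∀ θ : ℝ, 0 < θ → θ ≤ 1 →
      g x ≤ g z + 2*γ*(inner ℝ x (z - x) : ℝ) + γ*θ*‖z - x‖^2 := by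
    intro θ hθ0 hθ1
    have hw : x + θ • (z - x) = (1-θ) • x + θ • z := by
      rw [smul_sub, sub_smul, one_smul]; abel
    have hconv := hg.2 (Set.mem_univ x) (Set.mem_univ z)
      (by linarith : (0:ℝ) ≤ 1-θ) hθ0.le (by ring)
    rw [← hw] at hconv
    have hnorm : ‖x + θ • (z - x)‖^2
        = ‖x‖^2 + 2*θ*(inner ℝ x (z - x) : ℝ) + θ^2*‖z - x‖^2 := by
      rw [norm_add_sq_real, real_inner_smul_right, norm_smul]
      rw [Real.norm_eq_abs, abs_of_pos hθ0]
      ring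
    have h1 := hx (x + θ • (z - x))
    rw [hnorm] at h1
    have h2 : θ * (g x) ≤ θ * (g z + 2*γ*(inner ℝ x (z - x) : ℝ) + γ*θ*‖z - x‖^2) := by
      simp only [smul_eq_mul] at hconv
      nlinarith [h1, hconv]
    exact le_of_mul_le_mul_left h2 hθ0
  apply le_of_forall_pos_le_add
  intro ε hε
  set K := γ*‖z - x‖^2 with hK
  have hK0 : 0 ≤ K := by positivity
  set θ := min 1 (ε/(K+1)) with hθdef
  have hθ0 : 0 < θ := lt_min one_pos (by positivity)
  have hθ1 : θ ≤ 1 := min_le_left _ _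
  have h := step θ hθ0 hθ1
  have hbound : γ*θ*‖z - x‖^2 ≤ ε := by
    have h1 : θ ≤ ε/(K+1) := min_le_right _ _
    have h2 : γ*θ*‖z - x‖^2 = θ * K := by rw [hK]; ring
    rw [h2]
    calc θ * K ≤ ε/(K+1) * K := mul_le_mul_of_nonneg_right h1 hK0
      _ ≤ ε := by
        rw [div_mul_eq_mul_div, div_le_iff₀ (by linarith)]
        nlinarith
  linarith

/-- If `‖λᵏ‖ ≥ ‖λ*‖` and `λᵏ⁺¹ ≠ λ*`, one step of the fixed point iteration satisfies
`‖λᵏ⁺¹‖ ≤ ‖λᵏ‖^{1−1/p}‖λ*‖^{1/p}`. -/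
theorem fixed_point_iteration_contraction_above
    (n : ℕ) (g : EuclideanSpace ℝ (Fin n) → ℝ)
    (hg : ConvexOn ℝ Set.univ g) (μ p : ℝ) (hμ : 0 < μ) (hp : 1 ≤ p)
    (lamstar : EuclideanSpace ℝ (Fin n)) (hstar0 : lamstar ≠ 0)
    (hstar : ∀ z : EuclideanSpace ℝ (Fin n),
      g lamstar + μ / (1 + 1 / p) * ‖lamstar‖ ^ (1 + 1 / p) ≤
        g z + μ / (1 + 1 / p) * ‖z‖ ^ (1 + 1 / p))
    (lamk lamk1 : EuclideanSpace ℝ (Fin n))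
    (hk : ‖lamstar‖ ≤ ‖lamk‖) (hne : lamk1 ≠ lamstar)
    (hmin : ∀ z : EuclideanSpace ℝ (Fin n),
      g lamk1 + μ / 2 * ‖lamk‖ ^ (1 / p - 1) * ‖lamk1‖ ^ 2 ≤
        g z + μ / 2 * ‖lamk‖ ^ (1 / p - 1) * ‖z‖ ^ 2) :
    ‖lamk1‖ ≤ ‖lamk‖ ^ (1 - 1 / p) * ‖lamstar‖ ^ (1 / p) := by
  have hp0 : (0:ℝ) < p := by linarith
  set s : ℝ := 1 / p with hs
  have hs0 : 0 < s := by positivity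
  have hs1 : s ≤ 1 := by rw [hs, div_le_one hp0]; exact hp
  set b : ℝ := ‖lamstar‖ with hbdef
  set t : ℝ := ‖lamk‖ with htdef
  set a : ℝ := ‖lamk1‖ with hadef
  have hb : 0 < b := norm_pos_iff.mpr hstar0
  have ht : 0 < t := lt_of_lt_of_le hb hk
  have ha : 0 ≤ a := norm_nonneg _
  -- λ* also minimizes the quadratically regularized problem with β = μ/2 b^{s-1}
  have hstarq : ∀ z, g lamstar + μ/2 * b^(s-1) * b^2
      ≤ g z + μ/2 * b^(s-1) * ‖z‖^2 := by
    intro z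
    have h1 := hstar z
    have h2 := aux_psi μ s b ‖z‖ hμ hs0 hs1 hb (norm_nonneg z)
    linarith [h2, h1]
  -- subgradient inequalities
  have hγ1 : (0:ℝ) ≤ μ/2 * t^(s-1) := by positivity
  have hγ2 : (0:ℝ) ≤ μ/2 * b^(s-1) := by positivity
  have hA := aux_subgrad n g hg (μ/2 * t^(s-1)) hγ1 lamk1 (fun z => hmin z) lamstar
  have hB := aux_subgrad n g hg (μ/2 * b^(s-1)) hγ2 lamstar hstarq lamk1
  -- expand inner products
  have eA : (inner ℝ lamk1 (lamstar - lamk1) : ℝ)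
      = (inner ℝ lamk1 lamstar : ℝ) - a^2 := by
    rw [inner_sub_right, real_inner_self_eq_norm_sq]
  have eB : (inner ℝ lamstar (lamk1 - lamstar) : ℝ)
      = (inner ℝ lamk1 lamstar : ℝ) - b^2 := by
    rw [inner_sub_right, real_inner_self_eq_norm_sq, real_inner_comm]
  rw [eA] at hA
  rw [eB] at hB
  have hcs : (inner ℝ lamk1 lamstar : ℝ) ≤ a * b := real_inner_le_norm lamk1 lamstar
  -- key factored inequality
  have hkey : (a - b) * ((μ/2 * t^(s-1)) * a - (μ/2 * b^(s-1)) * b) ≤ 0 := by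
    nlinarith [hA, hB, hcs, hγ1, hγ2]
  have hbs : b^(1-s) * b^s = b := by
    rw [← Real.rpow_add hb]; norm_num
  by_cases hab : a ≤ b
  · calc a ≤ b := hab
      _ = b^(1-s) * b^s := hbs.symm
      _ ≤ t^(1-s) * b^s := by
        apply mul_le_mul_of_nonneg_right
          (Real.rpow_le_rpow hb.le hk (by linarith)) (Real.rpow_nonneg hb.le _)
  · push_neg at hab
    have h1 : (μ/2 * t^(s-1)) * a ≤ (μ/2 * b^(s-1)) * b := by nlinarith [hkey]
    have h2 : t^(s-1) * a ≤ b^(s-1) * b := by nlinarith [h1]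
    have h3 : b^(s-1) * b = b^s := by
      nth_rewrite 2 [← Real.rpow_one b]
      rw [← Real.rpow_add hb]; norm_num
    rw [h3] at h2
    have h4 : t^(1-s) * (t^(s-1) * a) ≤ t^(1-s) * b^s :=
      mul_le_mul_of_nonneg_left h2 (Real.rpow_nonneg ht.le _)
    have h5 : t^(1-s) * (t^(s-1) * a) = a := by
      rw [← mul_assoc, ← Real.rpow_add ht]
      norm_num
    rwa [h5] at h4
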